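/- Let H be an n×n positive semidefinite symmetric matrix and g ∈ ℝⁿ a nonzero vector. Define g_y(μ) = μ / ‖(H + μI)^{-1}g‖ for μ > 0. Then g_y is continuously differentiable and strictly increasing on (0,∞), and its derivative satisfies 0 < g_y'(μ) ≤ 2/‖(H + μI)^{-1}g‖. -/

import Mathlib

open Real Matrix Set

attribute [local instance] Matrix.linftyOpNormedRing Matrix.linftyOpNormedAlgebra

namespace Stmt7Aux

variable {n : ℕ} {H : Matrix (Fin n) (Fin n) ℝ} {g : Fin n → ℝ}

lemma Apd (hH : H.PosSemidef) {μ : ℝ} (hμ : 0 < μ) :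
    (H + μ • 1 : Matrix (Fin n) (Fin n) ℝ).PosDef := by
  refine Matrix.PosDef.posSemidef_add hH ?_
  rw [smul_one_eq_diagonal]
  exact Matrix.PosDef.diagonal fun _ => hμ

noncomputable def Lg (g : Fin n → ℝ) :
    Matrix (Fin n) (Fin n) ℝ →L[ℝ] EuclideanSpace ℝ (Fin n) :=
  LinearMap.toContinuousLinearMap <|
  { toFun := fun M => (WithLp.equiv 2 (Fin n → ℝ)).symm (M *ᵥ g)
    map_add' := fun M N => by simp [Matrix.add_mulVec]
    map_smul' := fun c M => by simp [Matrix.smul_mulVec] }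

lemma hasDerivAt_inv (hH : H.PosSemidef) {μ : ℝ} (hμ : 0 < μ) :
    HasDerivAt (fun t : ℝ => (H + t • 1)⁻¹)
      (-((H + μ • 1)⁻¹ * (H + μ • 1)⁻¹)) μ := by
  have hu : IsUnit (H + μ • 1 : Matrix (Fin n) (Fin n) ℝ) := (Apd hH hμ).isUnit
  have hA : HasDerivAt (fun t : ℝ => H + t • (1 : Matrix (Fin n) (Fin n) ℝ))
      (1 : Matrix (Fin n) (Fin n) ℝ) μ := by
    have h := ((hasDerivAt_id μ).smul_const (1 : Matrix (Fin n) (Fin n) ℝ)).const_add H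
    simp [-hasDerivAt_const_add_iff] at h
    exact h
  have h1 := hasFDerivAt_ringInverse (𝕜 := ℝ) hu.unit
  rw [hu.unit_spec] at h1
  have h2 := h1.comp_hasDerivAt μ hA
  simp only [Function.comp_def, ← Matrix.nonsing_inv_eq_ringInverse] at h2
  simp [ContinuousLinearMap.mulLeftRight_apply, Matrix.coe_units_inv, hu.unit_spec] at h2
  exact h2

lemma hasDerivAt_x (hH : H.PosSemidef) {μ : ℝ} (hμ : 0 < μ) :
    HasDerivAt (fun t : ℝ => (WithLp.equiv 2 (Fin n → ℝ)).symm ((H + t • 1)⁻¹.mulVec g))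
      (-(WithLp.equiv 2 (Fin n → ℝ)).symm
         (((H + μ • 1)⁻¹ * (H + μ • 1)⁻¹).mulVec g)) μ := by
  have h := ((Lg g).hasFDerivAt.comp_hasDerivAt μ (hasDerivAt_inv hH hμ))
  refine h.congr_deriv ?_
  show WithLp.toLp 2 ((-((H + μ • 1)⁻¹ * (H + μ • 1)⁻¹)) *ᵥ g) = _
  simp [Matrix.neg_mulVec]

lemma xv_ne (hH : H.PosSemidef) (hg : g ≠ 0) {μ : ℝ} (hμ : 0 < μ) :
    (H + μ • 1)⁻¹ *ᵥ g ≠ 0 := by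
  intro h
  apply hg
  have hu := (Apd hH hμ).isUnit
  have := congrArg (fun v => (H + μ • 1) *ᵥ v) h
  simpa [Matrix.mulVec_mulVec, Matrix.mul_nonsing_inv _ ((Matrix.isUnit_iff_isUnit_det _).mp hu),
    Matrix.one_mulVec] using this

lemma norm_pos (hH : H.PosSemidef) (hg : g ≠ 0) {μ : ℝ} (hμ : 0 < μ) :
    0 < ‖(WithLp.equiv 2 (Fin n → ℝ)).symm ((H + μ • 1)⁻¹.mulVec g)‖ := by
  rw [norm_pos_iff]
  intro h
  apply xv_ne hH hg hμ
  funext i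
  exact congrArg (fun v : EuclideanSpace ℝ (Fin n) => v i) h

lemma hasDerivAt_F (hH : H.PosSemidef) (hg : g ≠ 0) {μ : ℝ} (hμ : 0 < μ) :
    HasDerivAt (fun t : ℝ => t / ‖(WithLp.equiv 2 (Fin n → ℝ)).symm ((H + t • 1)⁻¹.mulVec g)‖)
      ((‖(WithLp.equiv 2 (Fin n → ℝ)).symm ((H + μ • 1)⁻¹.mulVec g)‖ ^ 2
          + μ * (((H + μ • 1)⁻¹ *ᵥ g) ⬝ᵥ (((H + μ • 1)⁻¹ * (H + μ • 1)⁻¹) *ᵥ g)))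
        / ‖(WithLp.equiv 2 (Fin n → ℝ)).symm ((H + μ • 1)⁻¹.mulVec g)‖ ^ 3) μ := by
  have hx := hasDerivAt_x (g := g) hH hμ
  have hpos := norm_pos hH hg hμ
  have hN := hx.inner ℝ hx
  have hNne : (inner ℝ ((WithLp.equiv 2 (Fin n → ℝ)).symm ((H + μ • 1)⁻¹.mulVec g))
      ((WithLp.equiv 2 (Fin n → ℝ)).symm ((H + μ • 1)⁻¹.mulVec g)) : ℝ) ≠ 0 := by
    rw [real_inner_self_eq_norm_sq]
    positivity
  have hsq := (Real.hasDerivAt_sqrt hNne).comp μ hN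
  have funeq : (Real.sqrt ∘ fun t : ℝ =>
      (inner ℝ ((WithLp.equiv 2 (Fin n → ℝ)).symm ((H + t • 1)⁻¹.mulVec g))
        ((WithLp.equiv 2 (Fin n → ℝ)).symm ((H + t • 1)⁻¹.mulVec g)) : ℝ)) =
      fun t : ℝ => ‖(WithLp.equiv 2 (Fin n → ℝ)).symm ((H + t • 1)⁻¹.mulVec g)‖ := by
    funext t
    rw [Function.comp_apply, real_inner_self_eq_norm_sq, Real.sqrt_sq (norm_nonneg _)]
  rw [funeq] at hsq
  have hF := (hasDerivAt_id μ).div hsq (ne_of_gt hpos)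
  convert hF using 1
  case e'_4 => rfl
  case e'_5 => rfl
  case e'_8 => rfl
  have h1 : (inner ℝ ((WithLp.equiv 2 (Fin n → ℝ)).symm ((H + μ • 1)⁻¹.mulVec g))
      (-(WithLp.equiv 2 (Fin n → ℝ)).symm (((H + μ • 1)⁻¹ * (H + μ • 1)⁻¹).mulVec g)) : ℝ)
      = -(((H + μ • 1)⁻¹ *ᵥ g) ⬝ᵥ (((H + μ • 1)⁻¹ * (H + μ • 1)⁻¹) *ᵥ g)) := by
    rw [inner_neg_right, WithLp.equiv_symm_apply, EuclideanSpace.inner_toLp_toLp]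
    simp [dotProduct_comm]
  have h2 : (inner ℝ (-(WithLp.equiv 2 (Fin n → ℝ)).symm (((H + μ • 1)⁻¹ * (H + μ • 1)⁻¹).mulVec g))
      ((WithLp.equiv 2 (Fin n → ℝ)).symm ((H + μ • 1)⁻¹.mulVec g)) : ℝ)
      = -(((H + μ • 1)⁻¹ *ᵥ g) ⬝ᵥ (((H + μ • 1)⁻¹ * (H + μ • 1)⁻¹) *ᵥ g)) := by
    rw [inner_neg_left, WithLp.equiv_symm_apply, EuclideanSpace.inner_toLp_toLp]
    simp [dotProduct_comm]
  have h3 : Real.sqrt (inner ℝ ((WithLp.equiv 2 (Fin n → ℝ)).symm ((H + μ • 1)⁻¹.mulVec g))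
      ((WithLp.equiv 2 (Fin n → ℝ)).symm ((H + μ • 1)⁻¹.mulVec g)) : ℝ)
      = ‖(WithLp.equiv 2 (Fin n → ℝ)).symm ((H + μ • 1)⁻¹.mulVec g)‖ := by
    rw [real_inner_self_eq_norm_sq, Real.sqrt_sq (norm_nonneg _)]
  rw [h1, h2, h3]
  set a := ‖(WithLp.equiv 2 (Fin n → ℝ)).symm ((H + μ • 1)⁻¹.mulVec g)‖
  set p := ((H + μ • 1)⁻¹ *ᵥ g) ⬝ᵥ (((H + μ • 1)⁻¹ * (H + μ • 1)⁻¹) *ᵥ g)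
  field_simp
  simp only [id]
  ring

lemma p_nonneg (hH : H.PosSemidef) {μ : ℝ} (hμ : 0 < μ) :
    0 ≤ ((H + μ • 1)⁻¹ *ᵥ g) ⬝ᵥ (((H + μ • 1)⁻¹ * (H + μ • 1)⁻¹) *ᵥ g) := by
  have hpd := (Apd hH hμ).inv
  have h := hpd.posSemidef.dotProduct_mulVec_nonneg ((H + μ • 1)⁻¹ *ᵥ g)
  simpa [Matrix.mulVec_mulVec] using h

lemma key (hH : H.PosSemidef) {μ : ℝ} (hμ : 0 < μ) :
    μ * (((H + μ • 1)⁻¹ *ᵥ g) ⬝ᵥ (((H + μ • 1)⁻¹ * (H + μ • 1)⁻¹) *ᵥ g))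
      ≤ ((H + μ • 1)⁻¹ *ᵥ g) ⬝ᵥ ((H + μ • 1)⁻¹ *ᵥ g) := by
  have hu := (Apd hH hμ).isUnit
  have hdet := (Matrix.isUnit_iff_isUnit_det _).mp hu
  set w := ((H + μ • 1)⁻¹ * (H + μ • 1)⁻¹) *ᵥ g with hw
  have hxw : (H + μ • 1)⁻¹ *ᵥ g = (H + μ • 1) *ᵥ w := by
    rw [hw, Matrix.mulVec_mulVec, ← mul_assoc, Matrix.mul_nonsing_inv _ hdet, one_mul]
  rw [hxw]
  have expand : (H + μ • 1) *ᵥ w = H *ᵥ w + μ • w := by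
    rw [Matrix.add_mulVec, Matrix.smul_mulVec, Matrix.one_mulVec]
  rw [expand]
  have hHw : 0 ≤ w ⬝ᵥ (H *ᵥ w) := by simpa using hH.dotProduct_mulVec_nonneg w
  have hHw2 : 0 ≤ (H *ᵥ w) ⬝ᵥ (H *ᵥ w) :=
    Finset.sum_nonneg fun i _ => mul_self_nonneg _
  have hcomm : (H *ᵥ w) ⬝ᵥ w = w ⬝ᵥ (H *ᵥ w) := dotProduct_comm _ _
  simp only [dotProduct_add, add_dotProduct, smul_dotProduct,
    dotProduct_smul, smul_eq_mul]
  nlinarith [hHw, hHw2, hcomm]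

lemma norm_sq_eq (v : Fin n → ℝ) :
    ‖(WithLp.equiv 2 (Fin n → ℝ)).symm v‖ ^ 2 = v ⬝ᵥ v := by
  rw [← real_inner_self_eq_norm_sq, WithLp.equiv_symm_apply, EuclideanSpace.inner_toLp_toLp]
  simp

lemma cont_inv (hH : H.PosSemidef) :
    ContinuousOn (fun t : ℝ => (H + t • 1)⁻¹) (Ioi (0 : ℝ)) := by
  intro μ hμ
  have hu : IsUnit (H + μ • 1 : Matrix (Fin n) (Fin n) ℝ) := (Apd hH hμ).isUnit
  have h1 : ContinuousAt Ring.inverse (H + μ • 1 : Matrix (Fin n) (Fin n) ℝ) := by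
    rw [← hu.unit_spec]
    exact NormedRing.inverse_continuousAt hu.unit
  have h2 : Continuous (fun t : ℝ => H + t • (1 : Matrix (Fin n) (Fin n) ℝ)) := by
    fun_prop
  have h3 : ContinuousAt (fun t : ℝ => Ring.inverse (H + t • (1 : Matrix (Fin n) (Fin n) ℝ))) μ :=
    ContinuousAt.comp (g := Ring.inverse) (f := fun t : ℝ => H + t • (1 : Matrix (Fin n) (Fin n) ℝ)) h1 h2.continuousAt
  simp only [Function.comp_def, ← Matrix.nonsing_inv_eq_ringInverse] at h3
  exact h3.continuousWithinAt

end Stmt7Aux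

open Stmt7Aux

/-- For `H ⪰ 0` symmetric and `g ≠ 0`, the function `g_y(μ) = μ/‖(H+μI)⁻¹g‖` is
continuously differentiable and strictly increasing on `(0,∞)`, with
`0 < g_y'(μ) ≤ 2/‖(H+μI)⁻¹g‖`. -/
theorem stmt7 {n : ℕ} (H : Matrix (Fin n) (Fin n) ℝ) (g : Fin n → ℝ)
    (hH : H.PosSemidef) (hg : g ≠ 0) :
    StrictMonoOn
        (fun μ : ℝ => μ / ‖(WithLp.equiv 2 (Fin n → ℝ)).symm ((H + μ • 1)⁻¹.mulVec g)‖)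
        (Set.Ioi 0) ∧
    ContinuousOn
        (deriv fun μ : ℝ =>
          μ / ‖(WithLp.equiv 2 (Fin n → ℝ)).symm ((H + μ • 1)⁻¹.mulVec g)‖)
        (Set.Ioi 0) ∧
    ∀ μ : ℝ, μ ∈ Set.Ioi (0 : ℝ) →
      HasDerivAt
          (fun μ : ℝ =>
            μ / ‖(WithLp.equiv 2 (Fin n → ℝ)).symm ((H + μ • 1)⁻¹.mulVec g)‖)
          (deriv (fun μ : ℝ =>
            μ / ‖(WithLp.equiv 2 (Fin n → ℝ)).symm ((H + μ • 1)⁻¹.mulVec g)‖) μ) μ ∧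
        0 < deriv (fun μ : ℝ =>
            μ / ‖(WithLp.equiv 2 (Fin n → ℝ)).symm ((H + μ • 1)⁻¹.mulVec g)‖) μ ∧
        deriv (fun μ : ℝ =>
            μ / ‖(WithLp.equiv 2 (Fin n → ℝ)).symm ((H + μ • 1)⁻¹.mulVec g)‖) μ ≤
          2 / ‖(WithLp.equiv 2 (Fin n → ℝ)).symm ((H + μ • 1)⁻¹.mulVec g)‖ := by
  classical
  set F : ℝ → ℝ :=
    fun μ : ℝ => μ / ‖(WithLp.equiv 2 (Fin n → ℝ)).symm ((H + μ • 1)⁻¹.mulVec g)‖ with hFdef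
  set D : ℝ → ℝ := fun t : ℝ =>
    (‖(WithLp.equiv 2 (Fin n → ℝ)).symm ((H + t • 1)⁻¹.mulVec g)‖ ^ 2
        + t * (((H + t • 1)⁻¹ *ᵥ g) ⬝ᵥ (((H + t • 1)⁻¹ * (H + t • 1)⁻¹) *ᵥ g)))
      / ‖(WithLp.equiv 2 (Fin n → ℝ)).symm ((H + t • 1)⁻¹.mulVec g)‖ ^ 3 with hDdef
  have hDF : ∀ μ ∈ Set.Ioi (0 : ℝ), HasDerivAt F (D μ) μ := fun μ hμ =>
    hasDerivAt_F hH hg hμ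
  have hderiv : ∀ μ ∈ Set.Ioi (0 : ℝ), deriv F μ = D μ := fun μ hμ => (hDF μ hμ).deriv
  have hDpos : ∀ μ ∈ Set.Ioi (0 : ℝ), 0 < D μ := by
    intro μ hμ
    have hpos := norm_pos hH hg hμ
    have hp := p_nonneg (g := g) hH hμ
    have hnum : 0 < ‖(WithLp.equiv 2 (Fin n → ℝ)).symm ((H + μ • 1)⁻¹.mulVec g)‖ ^ 2
        + μ * (((H + μ • 1)⁻¹ *ᵥ g) ⬝ᵥ (((H + μ • 1)⁻¹ * (H + μ • 1)⁻¹) *ᵥ g)) :=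
      add_pos_of_pos_of_nonneg (pow_pos hpos 2) (mul_nonneg (le_of_lt hμ) hp)
    exact div_pos hnum (pow_pos hpos 3)
  have hDle : ∀ μ ∈ Set.Ioi (0 : ℝ),
      D μ ≤ 2 / ‖(WithLp.equiv 2 (Fin n → ℝ)).symm ((H + μ • 1)⁻¹.mulVec g)‖ := by
    intro μ hμ
    have hpos := norm_pos hH hg hμ
    have hkey := key (g := g) hH hμ
    have hsq := norm_sq_eq ((H + μ • 1)⁻¹ *ᵥ g)
    rw [hDdef]
    rw [div_le_div_iff₀ (pow_pos hpos 3) hpos]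
    nlinarith [hpos, hkey, hsq]
  refine ⟨?_, ?_, ?_⟩
  · have hcF : ContinuousOn F (Set.Ioi 0) := fun μ hμ =>
      ((hDF μ hμ).continuousAt).continuousWithinAt
    refine strictMonoOn_of_deriv_pos (convex_Ioi 0) hcF ?_
    intro μ hμ
    rw [interior_Ioi] at hμ
    rw [hderiv μ hμ]
    exact hDpos μ hμ
  · refine ContinuousOn.congr ?_ (fun μ hμ => hderiv μ hμ)
    have hinv := cont_inv (H := H) hH
    have hsqc : ContinuousOn (fun t : ℝ => ((H + t • 1)⁻¹ * (H + t • 1)⁻¹))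
        (Set.Ioi 0) := hinv.mul hinv
    have hXc : ContinuousOn
        (fun t : ℝ => (WithLp.equiv 2 (Fin n → ℝ)).symm ((H + t • 1)⁻¹.mulVec g))
        (Set.Ioi 0) := (Lg g).continuous.comp_continuousOn hinv
    have hWc : ContinuousOn
        (fun t : ℝ => (WithLp.equiv 2 (Fin n → ℝ)).symm
          ((((H + t • 1)⁻¹ * (H + t • 1)⁻¹)).mulVec g))
        (Set.Ioi 0) := (Lg g).continuous.comp_continuousOn hsqc
    have hpc : ContinuousOn
        (fun t : ℝ => ((H + t • 1)⁻¹ *ᵥ g) ⬝ᵥ (((H + t • 1)⁻¹ * (H + t • 1)⁻¹) *ᵥ g))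
        (Set.Ioi 0) := by
      have heq : (fun t : ℝ =>
          ((H + t • 1)⁻¹ *ᵥ g) ⬝ᵥ (((H + t • 1)⁻¹ * (H + t • 1)⁻¹) *ᵥ g)) =
          fun t : ℝ => (inner ℝ ((WithLp.equiv 2 (Fin n → ℝ)).symm ((H + t • 1)⁻¹.mulVec g))
            ((WithLp.equiv 2 (Fin n → ℝ)).symm
              ((((H + t • 1)⁻¹ * (H + t • 1)⁻¹)).mulVec g)) : ℝ) := by
        funext t
        rw [WithLp.equiv_symm_apply, EuclideanSpace.inner_toLp_toLp]
        simp [dotProduct_comm]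
      rw [heq]
      exact hXc.inner hWc
    have hnormc : ContinuousOn
        (fun t : ℝ => ‖(WithLp.equiv 2 (Fin n → ℝ)).symm ((H + t • 1)⁻¹.mulVec g)‖)
        (Set.Ioi 0) := hXc.norm
    exact ((hnormc.pow 2).add (continuousOn_id.mul hpc)).div (hnormc.pow 3)
      fun t ht => pow_ne_zero 3 (ne_of_gt (norm_pos hH hg ht))
  · intro μ hμ
    have h := hDF μ hμ
    rw [hderiv μ hμ]
    exact ⟨h, hDpos μ hμ, hDle μ hμ⟩
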